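/- Let Λ be a real vector space and S : (ℕ → Λ) → Λ an ℝ-linear map satisfying the unit and associativity axioms of an algebra over the coperad ℝ[X]. If Λ is finite dimensional, then ε is nilpotent: there exists n ∈ ℕ with ε^n = 0. -/
import Mathlib


/-- If `(Λ, S)` is an algebra over the coperad `ℝ[X]`
(`S` is ℝ-linear and satisfies the unit and associativity axioms),
`ε a = S (0, a, 0, 0, …)`, and `Λ` is finite dimensional, then `ε` is
nilpotent: some iterate of `ε` is the zero map. -/
theorem eps_nilpotent_of_finiteDimensional
    (Λ : Type*) [AddCommGroup Λ] [Module ℝ Λ] [FiniteDimensional ℝ Λ]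
    (S : (ℕ → Λ) →ₗ[ℝ] Λ)
    (hunit : ∀ a : Λ, S (fun n => if n = 0 then a else 0) = a)
    (hassoc : ∀ a : ℕ → ℕ → Λ,
      S (fun i => S (a i)) = S (fun n => ∑ p ∈ Finset.range (n + 1), a p (n - p)))
    (ε : Λ → Λ) (hε : ∀ x : Λ, ε x = S (fun n => if n = 1 then x else 0)) :
    ∃ n : ℕ, ∀ x : Λ, ε^[n] x = 0 := by
  classical
  -- ε as a linear map
  set E : Λ →ₗ[ℝ] Λ := S.comp (LinearMap.single ℝ (fun _ : ℕ => Λ) 1) with hE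
  have hEε : ∀ x : Λ, E x = ε x := by
    intro x
    rw [hε]
    simp only [hE, LinearMap.comp_apply, LinearMap.single_apply]
    congr 1
    funext n
    simp [Pi.single_apply, eq_comm]
  -- Key lemma: top of an infinite E-tower is zero
  have key : ∀ x : ℕ → Λ, (∀ n, E (x (n + 1)) = x n) → x 0 = 0 := by
    intro x hx
    have h := hassoc (fun p q => if q = 1 then x (p + 1) else 0)
    have h1 : (fun i => S (fun q => if q = 1 then x (i + 1) else 0)) = x := by
      funext i
      have := hEε (x (i + 1))
      rw [hε] at this
      have h2 : E (x (i + 1)) = S (fun q => if q = 1 then x (i + 1) else 0) := by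
        rw [this, ← hε]
      rw [← h2, hx]
    have h2 : (fun n => ∑ p ∈ Finset.range (n + 1),
        (fun p q => if q = 1 then x (p + 1) else 0) p (n - p))
        = fun n => if n = 0 then 0 else x n := by
      funext n
      cases n with
      | zero => simp
      | succ m =>
        simp only [Nat.succ_ne_zero, if_false]
        rw [Finset.sum_congr rfl
          (fun p hp => show (if m + 1 - p = 1 then x (p + 1) else 0)
              = if p = m then x (p + 1) else 0 by
            have := Finset.mem_range.mp hp
            congr 1
            simp only [eq_iff_iff]
            omega)]
        rw [Finset.sum_ite_eq' (Finset.range (m + 2)) m (fun p => x (p + 1))]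
        simp
    rw [h1, h2] at h
    have h3 : x - (fun n => if n = 0 then 0 else x n)
        = fun n => if n = 0 then x 0 else 0 := by
      funext n
      cases n with
      | zero => simp
      | succ m => simp
    have h4 : S x - S (fun n => if n = 0 then 0 else x n)
        = S (fun n => if n = 0 then x 0 else 0) := by
      rw [← map_sub, h3]
    rw [h, sub_self] at h4
    rw [hunit (x 0)] at h4
    exact h4.symm
  -- finrank of range (E ^ n) is antitone
  have hmono : ∀ n, LinearMap.range (E ^ (n + 1)) ≤ LinearMap.range (E ^ n) := by
    intro n y hy
    obtain ⟨w, hw⟩ := hy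
    rw [pow_succ] at hw
    exact ⟨E w, hw⟩
  -- find k with equal consecutive ranges
  have hstab : ∃ k, LinearMap.range (E ^ (k + 1)) = LinearMap.range (E ^ k) := by
    by_contra hc
    push_neg at hc
    have hlt : ∀ n, Module.finrank ℝ (LinearMap.range (E ^ (n + 1)))
        < Module.finrank ℝ (LinearMap.range (E ^ n)) := by
      intro n
      rcases lt_or_eq_of_le (Submodule.finrank_mono (hmono n)) with h | h
      · exact h
      · exact absurd (Submodule.eq_of_le_of_finrank_le (hmono n) h.ge) (hc n)
    have hle : ∀ n, Module.finrank ℝ (LinearMap.range (E ^ n)) + n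
        ≤ Module.finrank ℝ (LinearMap.range (E ^ 0)) := by
      intro n
      induction n with
      | zero => simp
      | succ m ih => have := hlt m; omega
    have := hle (Module.finrank ℝ (LinearMap.range (E ^ 0)) + 1)
    omega
  obtain ⟨k, hk⟩ := hstab
  refine ⟨k, fun x => ?_⟩
  -- every element of V := range (E ^ k) is zero
  have hsurj : ∀ y : LinearMap.range (E ^ k),
      ∃ z : LinearMap.range (E ^ k), E (z : Λ) = (y : Λ) := by
    rintro ⟨y, hy⟩
    rw [← hk] at hy
    obtain ⟨w, hw⟩ := hy
    refine ⟨⟨(E ^ k) w, ⟨w, rfl⟩⟩, ?_⟩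
    simp only
    rw [← hw, pow_succ']
    rfl
  choose g hg using hsurj
  have hV : ∀ y ∈ LinearMap.range (E ^ k), y = 0 := by
    intro y hy
    have := key (fun n => ((g^[n] ⟨y, hy⟩ : LinearMap.range (E ^ k)) : Λ))
      (fun n => by
        show E ((g^[n+1] ⟨y, hy⟩ : LinearMap.range (E ^ k)) : Λ)
          = ((g^[n] ⟨y, hy⟩ : LinearMap.range (E ^ k)) : Λ)
        rw [Function.iterate_succ_apply']
        exact hg (g^[n] ⟨y, hy⟩))
    simpa using this
  -- ε^[k] x = (E ^ k) x ∈ range (E ^ k)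
  have hiter : ∀ m (x : Λ), ε^[m] x = (E ^ m) x := by
    intro m
    induction m with
    | zero => simp
    | succ n ih =>
      intro x
      rw [Function.iterate_succ_apply, pow_succ, Module.End.mul_apply, ← ih, hEε]
  rw [hiter k x]
  exact hV _ ⟨x, rfl⟩
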